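/- There are exactly 27 elements C ∈ Λ with ⟨C,C⟩ = 4 and ⟨C,K⟩ = −4, and each such C is of the form C = −K + E for a unique line class E; conversely −K + E has these properties for every line class E. -/

import Mathlib

/-- The Picard lattice of the cubic surface: free ℤ-module of rank 7
with basis h, e₁, …, e₆ (coordinates: index 0 ↦ coefficient of h,
index i+1 ↦ coefficient of eᵢ). -/
abbrev Lam : Type := Fin 7 → ℤ

/-- The intersection form: ⟨h,h⟩ = 1, ⟨eᵢ,eᵢ⟩ = −1, distinct basis vectors orthogonal. -/
def ip (x y : Lam) : ℤ := x 0 * y 0 - ∑ i : Fin 6, x i.succ * y i.succ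

/-- The canonical class K = −3h + e₁ + ⋯ + e₆. -/
def Kc : Lam := ![-3, 1, 1, 1, 1, 1, 1]

/-- A line class: x with ⟨x,x⟩ = −1 and ⟨x,K⟩ = −1. -/
def IsLine (x : Lam) : Prop := ip x x = -1 ∧ ip x Kc = -1

/-- A fiber class: x with ⟨x,x⟩ = 0 and ⟨x,K⟩ = −2. -/
def IsFiber (x : Lam) : Prop := ip x x = 0 ∧ ip x Kc = -2

/- ------------------- auxiliary material ------------------- -/

lemma ip_eq (x y : Lam) : ip x y = x 0 * y 0 -
    (x 1 * y 1 + x 2 * y 2 + x 3 * y 3 + x 4 * y 4 + x 5 * y 5 + x 6 * y 6) := by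
  simp [ip, Fin.sum_univ_six]

lemma Kc0 : Kc 0 = -3 := rfl
lemma Kc1 : Kc 1 = 1 := rfl
lemma Kc2 : Kc 2 = 1 := rfl
lemma Kc3 : Kc 3 = 1 := rfl
lemma Kc4 : Kc 4 = 1 := rfl
lemma Kc5 : Kc 5 = 1 := rfl
lemma Kc6 : Kc 6 = 1 := rfl

/-- The 27 line classes. -/
def lineList : List Lam := [![0,1,0,0,0,0,0],
  ![0,0,1,0,0,0,0],
  ![0,0,0,1,0,0,0],
  ![0,0,0,0,1,0,0],
  ![0,0,0,0,0,1,0],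
  ![0,0,0,0,0,0,1],
  ![1,-1,-1,0,0,0,0],
  ![1,-1,0,-1,0,0,0],
  ![1,-1,0,0,-1,0,0],
  ![1,-1,0,0,0,-1,0],
  ![1,-1,0,0,0,0,-1],
  ![1,0,-1,-1,0,0,0],
  ![1,0,-1,0,-1,0,0],
  ![1,0,-1,0,0,-1,0],
  ![1,0,-1,0,0,0,-1],
  ![1,0,0,-1,-1,0,0],
  ![1,0,0,-1,0,-1,0],
  ![1,0,0,-1,0,0,-1],
  ![1,0,0,0,-1,-1,0],
  ![1,0,0,0,-1,0,-1],
  ![1,0,0,0,0,-1,-1],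
  ![2,0,-1,-1,-1,-1,-1],
  ![2,-1,0,-1,-1,-1,-1],
  ![2,-1,-1,0,-1,-1,-1],
  ![2,-1,-1,-1,0,-1,-1],
  ![2,-1,-1,-1,-1,0,-1],
  ![2,-1,-1,-1,-1,-1,0]]

def L : Finset Lam := lineList.toFinset

lemma bnd (a b c1 c2 c3 c4 c5 : ℤ)
    (h1 : a*a - (b*b + c1*c1 + c2*c2 + c3*c3 + c4*c4 + c5*c5) = -1)
    (h2 : -3*a - (b + c1 + c2 + c3 + c4 + c5) = -1) :
    (a = 0 → 0 ≤ b ∧ b ≤ 1) ∧ (a = 1 → -1 ≤ b ∧ b ≤ 0) ∧ (a = 2 → -1 ≤ b ∧ b ≤ 0) := by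
  have hc : (c1+c2+c3+c4+c5)^2 ≤ 5*(c1*c1+c2*c2+c3*c3+c4*c4+c5*c5) := by
    nlinarith [sq_nonneg (c1-c2), sq_nonneg (c1-c3), sq_nonneg (c1-c4), sq_nonneg (c1-c5),
      sq_nonneg (c2-c3), sq_nonneg (c2-c4), sq_nonneg (c2-c5),
      sq_nonneg (c3-c4), sq_nonneg (c3-c5), sq_nonneg (c4-c5)]
  have hS : c1+c2+c3+c4+c5 = 1 - 3*a - b := by linarith
  rw [hS] at hc
  refine ⟨fun h => ?_, fun h => ?_, fun h => ?_⟩ <;> subst h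
  · have l1 : -14*b ≤ 10 := by nlinarith [hc, h1, sq_nonneg (b+1)]
    have l2 : 10*b ≤ 10 := by nlinarith [hc, h1, sq_nonneg (b-1)]
    omega
  · have l1 : -8*b ≤ 12 := by nlinarith [hc, h1, sq_nonneg (b+1)]
    have l2 : 16*b ≤ 12 := by nlinarith [hc, h1, sq_nonneg (b-1)]
    omega
  · have l1 : -14*b ≤ 24 := by nlinarith [hc, h1, sq_nonneg (b+2)]
    have l2 : 10*b ≤ 0 := by nlinarith [hc, h1, sq_nonneg b]
    omega

lemma mem27 (a b1 b2 b3 b4 b5 b6 : ℤ)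
    (h1 : a*a - (b1*b1 + b2*b2 + b3*b3 + b4*b4 + b5*b5 + b6*b6) = -1)
    (h2 : -3*a - (b1 + b2 + b3 + b4 + b5 + b6) = -1) :
    (![a,b1,b2,b3,b4,b5,b6] : Lam) ∈ L := by
  have hs : (b1+b2+b3+b4+b5+b6)^2 ≤ 6*(b1*b1+b2*b2+b3*b3+b4*b4+b5*b5+b6*b6) := by
    nlinarith [sq_nonneg (b1-b2), sq_nonneg (b1-b3), sq_nonneg (b1-b4), sq_nonneg (b1-b5),
      sq_nonneg (b1-b6), sq_nonneg (b2-b3), sq_nonneg (b2-b4), sq_nonneg (b2-b5),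
      sq_nonneg (b2-b6), sq_nonneg (b3-b4), sq_nonneg (b3-b5), sq_nonneg (b3-b6),
      sq_nonneg (b4-b5), sq_nonneg (b4-b6), sq_nonneg (b5-b6)]
  have hS : b1+b2+b3+b4+b5+b6 = 1 - 3*a := by linarith
  rw [hS] at hs
  have haL : -12*a ≤ 8 := by nlinarith [hs, h1, sq_nonneg (a+1)]
  have haU : 12*a ≤ 32 := by nlinarith [hs, h1, sq_nonneg (a-3)]
  have B1 := bnd a b1 b2 b3 b4 b5 b6 (by linear_combination h1) (by linear_combination h2)
  have B2 := bnd a b2 b1 b3 b4 b5 b6 (by linear_combination h1) (by linear_combination h2)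
  have B3 := bnd a b3 b1 b2 b4 b5 b6 (by linear_combination h1) (by linear_combination h2)
  have B4 := bnd a b4 b1 b2 b3 b5 b6 (by linear_combination h1) (by linear_combination h2)
  have B5 := bnd a b5 b1 b2 b3 b4 b6 (by linear_combination h1) (by linear_combination h2)
  have B6 := bnd a b6 b1 b2 b3 b4 b5 (by linear_combination h1) (by linear_combination h2)
  have ha : a = 0 ∨ a = 1 ∨ a = 2 := by omega
  rcases ha with rfl | rfl | rfl
  · obtain ⟨p1, q1⟩ := B1.1 rfl; obtain ⟨p2, q2⟩ := B2.1 rfl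
    obtain ⟨p3, q3⟩ := B3.1 rfl; obtain ⟨p4, q4⟩ := B4.1 rfl
    obtain ⟨p5, q5⟩ := B5.1 rfl; obtain ⟨p6, q6⟩ := B6.1 rfl
    interval_cases b1 <;> interval_cases b2 <;> interval_cases b3 <;>
      interval_cases b4 <;> interval_cases b5 <;> interval_cases b6 <;>
      first | omega | decide
  · obtain ⟨p1, q1⟩ := B1.2.1 rfl; obtain ⟨p2, q2⟩ := B2.2.1 rfl
    obtain ⟨p3, q3⟩ := B3.2.1 rfl; obtain ⟨p4, q4⟩ := B4.2.1 rfl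
    obtain ⟨p5, q5⟩ := B5.2.1 rfl; obtain ⟨p6, q6⟩ := B6.2.1 rfl
    interval_cases b1 <;> interval_cases b2 <;> interval_cases b3 <;>
      interval_cases b4 <;> interval_cases b5 <;> interval_cases b6 <;>
      first | omega | decide
  · obtain ⟨p1, q1⟩ := B1.2.2 rfl; obtain ⟨p2, q2⟩ := B2.2.2 rfl
    obtain ⟨p3, q3⟩ := B3.2.2 rfl; obtain ⟨p4, q4⟩ := B4.2.2 rfl
    obtain ⟨p5, q5⟩ := B5.2.2 rfl; obtain ⟨p6, q6⟩ := B6.2.2 rfl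
    interval_cases b1 <;> interval_cases b2 <;> interval_cases b3 <;>
      interval_cases b4 <;> interval_cases b5 <;> interval_cases b6 <;>
      first | omega | decide

lemma line_mem_L {x : Lam} (hx : IsLine x) : x ∈ L := by
  obtain ⟨h1, h2⟩ := hx
  rw [ip_eq] at h1 h2
  rw [Kc0, Kc1, Kc2, Kc3, Kc4, Kc5, Kc6] at h2
  have hx7 : x = ![x 0, x 1, x 2, x 3, x 4, x 5, x 6] := by
    funext i; fin_cases i <;> rfl
  rw [hx7]
  exact mem27 (x 0) (x 1) (x 2) (x 3) (x 4) (x 5) (x 6)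
    (by linear_combination h1) (by linear_combination h2)

lemma L_mem_line : ∀ x ∈ L, IsLine x := by unfold IsLine; decide

lemma conv_prop (E : Lam) (hE : IsLine E) :
    ip (-Kc + E) (-Kc + E) = 4 ∧ ip (-Kc + E) Kc = -4 := by
  obtain ⟨h1, h2⟩ := hE
  simp only [ip_eq] at h1 h2 ⊢
  simp only [Pi.add_apply, Pi.neg_apply, Kc0, Kc1, Kc2, Kc3, Kc4, Kc5, Kc6] at *
  constructor
  · linear_combination h1 - 2 * h2
  · linear_combination h2

lemma line_CK (C : Lam) (h1 : ip C C = 4) (h2 : ip C Kc = -4) : IsLine (C + Kc) := by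
  rw [ip_eq] at h1 h2
  constructor <;> rw [ip_eq] <;>
    simp only [Pi.add_apply, Kc0, Kc1, Kc2, Kc3, Kc4, Kc5, Kc6] at * <;>
    [linear_combination h1 + 2 * h2; linear_combination h2]

lemma key_set_eq : {C : Lam | ip C C = 4 ∧ ip C Kc = -4}
    = ↑(L.image (fun E => -Kc + E)) := by
  ext C
  simp only [Set.mem_setOf_eq, Finset.coe_image, Set.mem_image, Finset.mem_coe]
  constructor
  · rintro ⟨h1, h2⟩
    refine ⟨C + Kc, line_mem_L (line_CK C h1 h2), ?_⟩
    funext i; simp only [Pi.add_apply, Pi.neg_apply]; ring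
  · rintro ⟨E, hE, rfl⟩
    exact conv_prop E (L_mem_line E hE)

/-- There are exactly 27 classes C with ⟨C,C⟩ = 4, ⟨C,K⟩ = −4; each is −K + E for a
unique line class E, and conversely −K + E always has these properties. -/
theorem antiK_plus_line_classes :
    {C : Lam | ip C C = 4 ∧ ip C Kc = -4}.Finite ∧
    {C : Lam | ip C C = 4 ∧ ip C Kc = -4}.ncard = 27 ∧
    (∀ C : Lam, ip C C = 4 → ip C Kc = -4 → ∃! E : Lam, IsLine E ∧ C = -Kc + E) ∧
    (∀ E : Lam, IsLine E → ip (-Kc + E) (-Kc + E) = 4 ∧ ip (-Kc + E) Kc = -4) := by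
  have hinj : Function.Injective (fun E : Lam => -Kc + E) := fun x y h => by
    funext i
    have := congrFun h i
    simp only [Pi.add_apply, Pi.neg_apply] at this
    linarith
  refine ⟨?_, ?_, ?_, conv_prop⟩
  · rw [key_set_eq]; exact (L.image _).finite_toSet
  · rw [key_set_eq, Set.ncard_coe_finset, Finset.card_image_of_injective _ hinj]
    decide
  · intro C h1 h2
    refine ⟨C + Kc, ⟨line_CK C h1 h2, ?_⟩, ?_⟩
    · funext i; simp only [Pi.add_apply, Pi.neg_apply]; ring
    · rintro E ⟨hE, rfl⟩
      funext i; simp only [Pi.add_apply, Pi.neg_apply]; ring
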